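/- Define f_p recursively by f_1(ω) = (n_1 ω + α_1)/(ω + α_1) and f_p(ω) = ((n_p ω + α_p)/(ω + α_p))·e^{ω a_{p-1}}·f_{p-1}(ω)·(1 - ((n_p-2)ω + α_p)/(n_p ω + α_p)·e^{-2ω a_{p-1}}·g_{p-1}(ω)), with g_p as above. If all α_j > 0, a_j > 0, n_j ≥ 2, then ω = 0 is a zero of f_p of order exactly p-1; in particular the (p-1)-st derivative of f_p at 0 is nonzero. -/

import Mathlib

open Filter Complex Topology


/-- `gfun n α a p` is the function `g_{p+1}` of the paper (0-based indexing). -/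
noncomputable def gfun (n : ℕ → ℕ) (α a : ℕ → ℝ) : ℕ → ℂ → ℂ
  | 0, ω => (α 0 : ℂ) / ((n 0 : ℂ) * ω + (α 0 : ℂ))
  | p + 1, ω =>
      (((((n (p + 1) : ℂ) - 2) * ω + (α (p + 1) : ℂ)) / ((n (p + 1) : ℂ) * ω + (α (p + 1) : ℂ)))
        - ((((n (p + 1) : ℂ) - 4) * ω + (α (p + 1) : ℂ)) / ((n (p + 1) : ℂ) * ω + (α (p + 1) : ℂ)))
          * Complex.exp (-2 * ω * (a p : ℂ)) * gfun n α a p ω) /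
      (1 - ((((n (p + 1) : ℂ) - 2) * ω + (α (p + 1) : ℂ)) / ((n (p + 1) : ℂ) * ω + (α (p + 1) : ℂ)))
          * Complex.exp (-2 * ω * (a p : ℂ)) * gfun n α a p ω)

/-- `ffun n α a p` is the determinant function `f_{p+1}` of the paper (0-based indexing):
`f_1(ω) = (n_1 ω + α_1)/(ω + α_1)` and
`f_p(ω) = ((n_p ω + α_p)/(ω + α_p)) e^{ω a_{p-1}} f_{p-1}(ω)
            (1 - ((n_p-2)ω+α_p)/(n_p ω+α_p) e^{-2ω a_{p-1}} g_{p-1}(ω))`. -/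
noncomputable def ffun (n : ℕ → ℕ) (α a : ℕ → ℝ) : ℕ → ℂ → ℂ
  | 0, ω => ((n 0 : ℂ) * ω + (α 0 : ℂ)) / (ω + (α 0 : ℂ))
  | p + 1, ω =>
      (((n (p + 1) : ℂ) * ω + (α (p + 1) : ℂ)) / (ω + (α (p + 1) : ℂ)))
        * Complex.exp (ω * (a p : ℂ)) * ffun n α a p ω *
      (1 - ((((n (p + 1) : ℂ) - 2) * ω + (α (p + 1) : ℂ)) / ((n (p + 1) : ℂ) * ω + (α (p + 1) : ℂ)))
          * Complex.exp (-2 * ω * (a p : ℂ)) * gfun n α a p ω)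

private lemma slope_tendsto {f : ℂ → ℂ} {f' v : ℂ} (h : HasDerivAt f f' 0) (hv : f 0 = v) :
    Tendsto (fun ω : ℂ => (f ω - v) / ω) (𝓝[≠] (0:ℂ)) (𝓝 f') := by
  have h2 := hasDerivAt_iff_tendsto_slope.mp h
  have h3 : (fun ω : ℂ => (f ω - v) / ω) = slope f 0 := by
    funext ω; simp [slope_def_field, hv]
  rw [h3]; exact h2

/-- from slope limit, derive limit of the function itself -/
private lemma tendsto_of_slope {g : ℂ → ℂ} {c : ℂ}
    (h : Tendsto (fun ω : ℂ => (g ω - 1) / ω) (𝓝[≠] (0:ℂ)) (𝓝 c)) :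
    Tendsto g (𝓝[≠] (0:ℂ)) (𝓝 1) := by
  have hid : Tendsto (fun ω : ℂ => ω) (𝓝[≠] (0:ℂ)) (𝓝 0) :=
    tendsto_id.mono_left nhdsWithin_le_nhds
  have h2 : Tendsto (fun ω : ℂ => 1 + ((g ω - 1) / ω) * ω) (𝓝[≠] (0:ℂ)) (𝓝 (1 + c * 0)) :=
    tendsto_const_nhds.add (h.mul hid)
  rw [mul_zero, add_zero] at h2
  refine Tendsto.congr' ?_ h2
  filter_upwards [self_mem_nhdsWithin] with ω hω
  have hω : ω ≠ 0 := hω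
  field_simp
  ring


/-- The quotient factor `Q_{p+2}(ω)/ω` tends to a positive real limit. -/
private lemma Qlem (n : ℕ → ℕ) (α a : ℕ → ℝ) (p : ℕ)
    (hα : 0 < α (p+1)) (ha : 0 < a p) (c : ℝ) (hc : c < 0)
    (hg : Tendsto (fun ω : ℂ => (gfun n α a p ω - 1) / ω) (𝓝[≠] (0:ℂ)) (𝓝 (c:ℂ))) :
    Tendsto (fun ω : ℂ =>
          (1 - ((((n (p + 1) : ℂ) - 2) * ω + (α (p + 1) : ℂ)) /
                ((n (p + 1) : ℂ) * ω + (α (p + 1) : ℂ)))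
            * Complex.exp (-2 * ω * (a p : ℂ)) * gfun n α a p ω) / ω)
        (𝓝[≠] (0:ℂ)) (𝓝 ((2 / α (p+1) + 2 * a p - c : ℝ) : ℂ)) := by
  have hαne : (α (p+1) : ℂ) ≠ 0 := by exact_mod_cast hα.ne'
  set N : ℂ := (n (p+1) : ℂ) with hN
  set A : ℂ := (α (p+1) : ℂ) with hA
  set aC : ℂ := (a p : ℂ) with haC
  -- derivative of the rational factor
  have hden : HasDerivAt (fun ω : ℂ => N * ω + A) N 0 := by
    simpa using ((hasDerivAt_id (0:ℂ)).const_mul N).add_const A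
  have hnum : HasDerivAt (fun ω : ℂ => (N - 2) * ω + A) (N - 2) 0 := by
    simpa using ((hasDerivAt_id (0:ℂ)).const_mul (N - 2)).add_const A
  have hAfun : HasDerivAt (fun ω : ℂ => ((N - 2) * ω + A) / (N * ω + A)) (-(2 / A)) 0 := by
    have := hnum.div hden (by simpa using hαne)
    refine this.congr_deriv ?_
    simp only [mul_zero, zero_add]
    field_simp
    ring
  have hEfun : HasDerivAt (fun ω : ℂ => Complex.exp (-2 * ω * aC)) (-(2 * aC)) 0 := by
    have h1 : HasDerivAt (fun ω : ℂ => -2 * ω * aC) (-2 * aC) 0 := by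
      simpa using ((hasDerivAt_id (0:ℂ)).const_mul (-2 : ℂ)).mul_const aC
    simpa using h1.cexp
  have hF : HasDerivAt (fun ω : ℂ => (((N - 2) * ω + A) / (N * ω + A)) *
      Complex.exp (-2 * ω * aC)) (-(2 / A) - 2 * aC) 0 := by
    have := hAfun.mul hEfun
    refine this.congr_deriv ?_
    simp [hαne]
    ring
  have hF0 : (((N - 2) * (0:ℂ) + A) / (N * 0 + A)) * Complex.exp (-2 * 0 * aC) = 1 := by
    simp [hαne]
  have hslopeF := slope_tendsto hF hF0
  -- tendsto of AE to 1
  have hTAE : Tendsto (fun ω : ℂ => (((N - 2) * ω + A) / (N * ω + A)) *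
      Complex.exp (-2 * ω * aC)) (𝓝[≠] (0:ℂ)) (𝓝 1) := by
    have h1 : Tendsto (fun ω : ℂ => (((N - 2) * ω + A) / (N * ω + A)) *
        Complex.exp (-2 * ω * aC)) (𝓝[≠] (0:ℂ)) (𝓝 ((((N - 2) * (0:ℂ) + A) / (N * 0 + A)) *
        Complex.exp (-2 * 0 * aC))) := hF.continuousAt.tendsto.mono_left nhdsWithin_le_nhds
    rwa [hF0] at h1
  have hcomb : Tendsto (fun ω : ℂ =>
      -(( (((N - 2) * ω + A) / (N * ω + A)) * Complex.exp (-2 * ω * aC) - 1) / ω)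
      + ((((N - 2) * ω + A) / (N * ω + A)) * Complex.exp (-2 * ω * aC))
        * (-((gfun n α a p ω - 1) / ω)))
      (𝓝[≠] (0:ℂ)) (𝓝 (-(-(2 / A) - 2 * aC) + 1 * (-(c:ℂ)))) :=
    hslopeF.neg.add (hTAE.mul hg.neg)
  have hval : (-(-(2 / A) - 2 * aC) + 1 * (-(c:ℂ))) = ((2 / α (p+1) + 2 * a p - c : ℝ) : ℂ) := by
    rw [hA, haC]; push_cast; ring
  rw [hval] at hcomb
  refine Tendsto.congr' ?_ hcomb
  filter_upwards [self_mem_nhdsWithin] with ω hω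
  have hω : ω ≠ 0 := hω
  have key : ∀ X G : ℂ, -((X - 1) / ω) + X * -((G - 1) / ω) = (1 - X * G) / ω := by
    intro X G; field_simp; ring
  exact key _ _


private lemma gkey (n : ℕ → ℕ) (hn : ∀ j, 2 ≤ n j) (α a : ℕ → ℝ)
    (hα : ∀ j, 0 < α j) (ha : ∀ j, 0 < a j) :
    ∀ p, ∃ c : ℝ, c < 0 ∧
      Tendsto (fun ω : ℂ => (gfun n α a p ω - 1) / ω) (𝓝[≠] (0:ℂ)) (𝓝 (c:ℂ)) := by
  intro p
  induction p with
  | zero =>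
    have hα0 : (α 0 : ℂ) ≠ 0 := by exact_mod_cast (hα 0).ne'
    have hn0 : (0:ℝ) < n 0 := by exact_mod_cast Nat.lt_of_lt_of_le Nat.zero_lt_two (hn 0)
    refine ⟨-(n 0 : ℝ) / α 0, div_neg_of_neg_of_pos (by linarith) (hα 0), ?_⟩
    have hden : HasDerivAt (fun ω : ℂ => (n 0 : ℂ) * ω + (α 0 : ℂ)) (n 0 : ℂ) 0 := by
      simpa using ((hasDerivAt_id (0:ℂ)).const_mul (n 0 : ℂ)).add_const (α 0 : ℂ)
    have hg : HasDerivAt (fun ω : ℂ => (α 0 : ℂ) / ((n 0 : ℂ) * ω + (α 0 : ℂ)))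
        ((-(n 0 : ℝ) / α 0 : ℝ) : ℂ) 0 := by
      have := (hasDerivAt_const (0:ℂ) (α 0 : ℂ)).div hden (by simpa using hα0)
      refine this.congr_deriv ?_
      push_cast
      simp only [mul_zero, zero_add, zero_mul, zero_sub]
      field_simp
    have h0 : (α 0 : ℂ) / ((n 0 : ℂ) * 0 + (α 0 : ℂ)) = 1 := by simp [hα0]
    have := slope_tendsto hg h0
    refine this.congr ?_
    intro ω; simp [gfun]
  | succ p ih =>
    obtain ⟨c, hc, hgT⟩ := ih
    have hQ := Qlem n α a p (hα (p+1)) (ha p) c hc hgT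
    have hαp : (0:ℝ) < α (p+1) := hα (p+1)
    have hαne : (α (p+1) : ℂ) ≠ 0 := by exact_mod_cast hαp.ne'
    set N : ℂ := (n (p+1) : ℂ) with hN
    set A : ℂ := (α (p+1) : ℂ) with hA
    set aC : ℂ := (a p : ℂ) with haC
    set d' : ℝ := 2 / α (p+1) + 2 * a p - c with hd'
    have hd : 0 < d' := by
      have h1 : 0 < 2 / α (p+1) := by positivity
      have h2 := (ha p)
      simp only [hd']; linarith
    refine ⟨(2 / α (p+1)) * (c - 2 * a p) / d', ?_, ?_⟩
    · have h1 : c - 2 * a p < 0 := by have := ha p; linarith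
      have h2 : (0:ℝ) < 2 / α (p+1) := by positivity
      exact div_neg_of_neg_of_pos (mul_neg_of_pos_of_neg h2 h1) hd
    · -- limits of building blocks
      have hEfun : HasDerivAt (fun ω : ℂ => Complex.exp (-2 * ω * aC)) (-(2 * aC)) 0 := by
        have h1 : HasDerivAt (fun ω : ℂ => -2 * ω * aC) (-2 * aC) 0 := by
          simpa using ((hasDerivAt_id (0:ℂ)).const_mul (-2 : ℂ)).mul_const aC
        simpa using h1.cexp
      have hE0 : Complex.exp (-2 * (0:ℂ) * aC) = 1 := by simp
      have hslopeE := slope_tendsto hEfun hE0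
      have hTE : Tendsto (fun ω : ℂ => Complex.exp (-2 * ω * aC)) (𝓝[≠] (0:ℂ)) (𝓝 1) := by
        have h1 : Tendsto (fun ω : ℂ => Complex.exp (-2 * ω * aC)) (𝓝[≠] (0:ℂ))
            (𝓝 (Complex.exp (-2 * 0 * aC))) :=
          hEfun.continuousAt.tendsto.mono_left nhdsWithin_le_nhds
        rwa [hE0] at h1
      -- T5 : (E g - 1)/ω → c - 2 a
      have hT5 : Tendsto (fun ω : ℂ =>
          (Complex.exp (-2 * ω * aC) * gfun n α a p ω - 1) / ω) (𝓝[≠] (0:ℂ))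
          (𝓝 ((c - 2 * a p : ℝ) : ℂ)) := by
        have hcomb : Tendsto (fun ω : ℂ =>
            Complex.exp (-2 * ω * aC) * ((gfun n α a p ω - 1) / ω)
              + (Complex.exp (-2 * ω * aC) - 1) / ω)
            (𝓝[≠] (0:ℂ)) (𝓝 (1 * (c:ℂ) + (-(2 * aC)))) := (hTE.mul hgT).add hslopeE
        have hval : (1 * (c:ℂ) + (-(2 * aC))) = ((c - 2 * a p : ℝ) : ℂ) := by
          rw [haC]; push_cast; ring
        rw [hval] at hcomb
        refine Tendsto.congr' ?_ hcomb
        filter_upwards [self_mem_nhdsWithin] with ω hω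
        have hω : ω ≠ 0 := hω
        have key : ∀ X G : ℂ, X * ((G - 1) / ω) + (X - 1) / ω = (X * G - 1) / ω := by
          intro X G; field_simp; ring
        exact key _ _
      -- limit of 2/(Nω+A)
      have hTden : Tendsto (fun ω : ℂ => 2 / (N * ω + A)) (𝓝[≠] (0:ℂ)) (𝓝 (2 / A)) := by
        have hca : ContinuousAt (fun ω : ℂ => 2 / (N * ω + A)) 0 :=
          ContinuousAt.div continuousAt_const (by fun_prop) (by simpa using hαne)
        have h1 := hca.tendsto.mono_left (nhdsWithin_le_nhds (s := {(0:ℂ)}ᶜ))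
        simpa using h1
      have hdne : ((d':ℝ) : ℂ) ≠ 0 := by exact_mod_cast hd.ne'
      have hfinal := (hTden.mul hT5).div hQ hdne
      have hval2 : (2 / A * ((c - 2 * a p : ℝ) : ℂ)) / ((d':ℝ) : ℂ)
          = (((2 / α (p+1)) * (c - 2 * a p) / d' : ℝ) : ℂ) := by
        rw [hA]
        push_cast
        ring
      rw [hval2] at hfinal
      refine Tendsto.congr' ?_ hfinal
      -- eventual facts
      have hQne : ∀ᶠ ω in 𝓝[≠] (0:ℂ),
          (1 - (((N - 2) * ω + A) / (N * ω + A)) * Complex.exp (-2 * ω * aC)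
            * gfun n α a p ω) / ω ≠ 0 := hQ.eventually_ne hdne
      have hdenne : ∀ᶠ ω in 𝓝[≠] (0:ℂ), N * ω + A ≠ 0 := by
        have h1 : Tendsto (fun ω : ℂ => N * ω + A) (𝓝[≠] (0:ℂ)) (𝓝 (N * 0 + A)) :=
          (Continuous.tendsto (by fun_prop) 0).mono_left nhdsWithin_le_nhds
        refine (h1.eventually_ne ?_)
        simpa using hαne
      filter_upwards [self_mem_nhdsWithin, hQne, hdenne] with ω hω hQω hdenω
      have hω : ω ≠ 0 := hω
      have hDs : ∀ E G : ℂ, N * ω + A ≠ 0 →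
          1 - ((N - 2) * ω + A) / (N * ω + A) * E * G
            = (N * ω + A - ((N - 2) * ω + A) * E * G) / (N * ω + A) := by
        intro E G h1; field_simp
      have hDω : 1 - ((N - 2) * ω + A) / (N * ω + A) * Complex.exp (-2 * ω * aC)
          * gfun n α a p ω ≠ 0 := fun h => hQω (by rw [h, zero_div])
      have hnum : N * ω + A - ((N - 2) * ω + A) * Complex.exp (-2 * ω * aC)
          * gfun n α a p ω ≠ 0 := by
        intro h
        apply hDω
        rw [hDs _ _ hdenω]
        rw [show ((N - 2) * ω + A) * Complex.exp (-2 * ω * aC) * gfun n α a p ω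
          = ((N - 2) * ω + A) * (Complex.exp (-2 * ω * aC) * gfun n α a p ω) from by ring] at h ⊢
        rw [h, zero_div]
      have key : ∀ E G : ℂ, N * ω + A - ((N - 2) * ω + A) * E * G ≠ 0 →
          2 / (N * ω + A) * ((E * G - 1) / ω) /
            ((1 - ((N - 2) * ω + A) / (N * ω + A) * E * G) / ω)
          = ((((N - 2) * ω + A) / (N * ω + A) - ((N - 4) * ω + A) / (N * ω + A) * E * G) /
              (1 - ((N - 2) * ω + A) / (N * ω + A) * E * G) - 1) / ω := by
        intro E G hnum'
        rw [hDs _ _ hdenω]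
        set D := N * ω + A - ((N - 2) * ω + A) * E * G with hD
        field_simp
        rw [hD]
        ring
      have hgsucc : gfun n α a (p+1) ω
          = (((N - 2) * ω + A) / (N * ω + A)
              - ((N - 4) * ω + A) / (N * ω + A) * Complex.exp (-2 * ω * aC) * gfun n α a p ω)
            / (1 - ((N - 2) * ω + A) / (N * ω + A) * Complex.exp (-2 * ω * aC)
                * gfun n α a p ω) := by
        simp only [gfun, hN, hA, haC]
      rw [hgsucc]
      have hnum2 : N * ω + A - ((N - 2) * ω + A) * (Complex.exp (-2 * ω * aC)
          * gfun n α a p ω) ≠ 0 := by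
        intro h; apply hnum; rw [← h]; ring
      have := key (Complex.exp (-2 * ω * aC)) (gfun n α a p ω) (by
        intro h; apply hnum2; rw [← h]; ring)
      simp only [Pi.div_apply]
      rw [show ((N - 2) * ω + A) / (N * ω + A) * Complex.exp (-2 * ω * aC) * gfun n α a p ω
        = ((N - 2) * ω + A) / (N * ω + A) * (Complex.exp (-2 * ω * aC) * gfun n α a p ω)
        from by ring] at this ⊢
      rw [show ((N - 4) * ω + A) / (N * ω + A) * Complex.exp (-2 * ω * aC) * gfun n α a p ω
        = ((N - 4) * ω + A) / (N * ω + A) * (Complex.exp (-2 * ω * aC) * gfun n α a p ω)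
        from by ring] at this ⊢
      exact this



/-- `ω = 0` is a zero of `f_{p+1}` of order exactly `p`: the quotient `f_{p+1}(ω)/ω^p`
tends to a nonzero limit as `ω → 0`. -/
theorem stmt_9 (n : ℕ → ℕ) (hn : ∀ j, 2 ≤ n j) (α a : ℕ → ℝ)
    (hα : ∀ j, 0 < α j) (ha : ∀ j, 0 < a j) (p : ℕ) :
    ∃ L : ℂ, L ≠ 0 ∧
      Filter.Tendsto (fun ω : ℂ => ffun n α a p ω / ω ^ p)
        (nhdsWithin 0 {0}ᶜ) (nhds L) := by
  induction p with
  | zero =>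
    have hα0 : (α 0 : ℂ) ≠ 0 := by exact_mod_cast (hα 0).ne'
    refine ⟨1, one_ne_zero, ?_⟩
    have hca : ContinuousAt (fun ω : ℂ => ((n 0 : ℂ) * ω + (α 0 : ℂ)) / (ω + (α 0 : ℂ))) 0 :=
      ContinuousAt.div (by fun_prop) (by fun_prop) (by simpa using hα0)
    have h1 : Tendsto (fun ω : ℂ => ((n 0 : ℂ) * ω + (α 0 : ℂ)) / (ω + (α 0 : ℂ)))
        (𝓝[≠] (0:ℂ)) (𝓝 (((n 0 : ℂ) * 0 + (α 0 : ℂ)) / (0 + (α 0 : ℂ)))) :=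
      hca.tendsto.mono_left nhdsWithin_le_nhds
    have h2 : ((n 0 : ℂ) * 0 + (α 0 : ℂ)) / (0 + (α 0 : ℂ)) = 1 := by simp [hα0]
    rw [h2] at h1
    refine h1.congr ?_
    intro ω; simp [ffun]
  | succ p ih =>
    obtain ⟨L, hL, hT⟩ := ih
    obtain ⟨c, hc, hg⟩ := gkey n hn α a hα ha p
    have hQ := Qlem n α a p (hα (p+1)) (ha p) c hc hg
    have hd : (0:ℝ) < 2 / α (p+1) + 2 * a p - c := by
      have hαp := hα (p+1)
      have h1 : 0 < 2 / α (p+1) := by positivity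
      have h2 := ha p
      linarith
    have hαne : (α (p+1) : ℂ) ≠ 0 := by exact_mod_cast (hα (p+1)).ne'
    set N : ℂ := (n (p+1) : ℂ) with hN
    set A : ℂ := (α (p+1) : ℂ) with hA
    set aC : ℂ := (a p : ℂ) with haC
    -- first factor tends to 1
    have hfac : Tendsto (fun ω : ℂ => ((N * ω + A) / (ω + A)) * Complex.exp (ω * aC))
        (𝓝[≠] (0:ℂ)) (𝓝 1) := by
      have hca : ContinuousAt (fun ω : ℂ => ((N * ω + A) / (ω + A)) * Complex.exp (ω * aC)) 0 := by
        refine ContinuousAt.mul (ContinuousAt.div (by fun_prop) (by fun_prop) ?_) (by fun_prop)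
        simpa using hαne
      have h1 : Tendsto (fun ω : ℂ => ((N * ω + A) / (ω + A)) * Complex.exp (ω * aC))
          (𝓝[≠] (0:ℂ)) (𝓝 (((N * 0 + A) / (0 + A)) * Complex.exp (0 * aC))) :=
        hca.tendsto.mono_left nhdsWithin_le_nhds
      have h2 : ((N * 0 + A) / (0 + A)) * Complex.exp ((0:ℂ) * aC) = 1 := by simp [hαne]
      rwa [h2] at h1
    refine ⟨1 * L * ((2 / α (p+1) + 2 * a p - c : ℝ) : ℂ), ?_, ?_⟩
    · have : ((2 / α (p+1) + 2 * a p - c : ℝ) : ℂ) ≠ 0 := by exact_mod_cast hd.ne'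
      exact mul_ne_zero (mul_ne_zero one_ne_zero hL) this
    · have hcomb := (hfac.mul hT).mul hQ
      refine Tendsto.congr' ?_ hcomb
      filter_upwards [self_mem_nhdsWithin] with ω hω
      have hω : ω ≠ 0 := hω
      have hωp : ω ^ p ≠ 0 := pow_ne_zero _ hω
      have hfsucc : ffun n α a (p+1) ω
          = ((N * ω + A) / (ω + A)) * Complex.exp (ω * aC) * ffun n α a p ω *
            (1 - (((N - 2) * ω + A) / (N * ω + A)) * Complex.exp (-2 * ω * aC)
              * gfun n α a p ω) := by
        simp only [ffun, hN, hA, haC]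
      rw [hfsucc]
      have key : ∀ F f D : ℂ, F * (f / ω ^ p) * (D / ω) = F * f * D / ω ^ (p+1) := by
        intro F f D
        rw [pow_succ]
        field_simp
      exact key _ _ _
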